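/- For all integers a₁, a₂, a₃, a₄ ≥ 2, setting s₂ = a₁·W₁ − W₄, one has the exact identity |[2*(a₃−2), a₂, a₄, 2*(a₁−1)]| · W₁ = W₃ + (a₂a₃a₄ − a₂a₄ − a₃a₄ + 2a₄ − 1) · s₂; in particular |[2*(a₃−2), a₂, a₄, 2*(a₁−1)]| · W₁ ≡ W₃ (mod s₂). -/

import Mathlib

/-- Hirzebruch–Jung numerator: |[]| = 1, |[n]| = n,
|[n₁, n₂, …]| = n₁·|[n₂, …]| − |[n₃, …]|. -/
def hj : List ℤ → ℤ
  | [] => 1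
  | [n] => n
  | n :: m :: l => n * hj (m :: l) - hj l

lemma hj_rep_prepend (x : ℤ) (t : List ℤ) :
    ∀ k : ℕ, hj (List.replicate k 2 ++ x :: t) = ((k : ℤ) + 1) * hj (x :: t) - (k : ℤ) * hj t := by
  have key : ∀ k : ℕ,
      (hj (List.replicate k 2 ++ x :: t) = ((k : ℤ) + 1) * hj (x :: t) - (k : ℤ) * hj t) ∧
      (hj (List.replicate (k + 1) 2 ++ x :: t)
        = ((k : ℤ) + 2) * hj (x :: t) - ((k : ℤ) + 1) * hj t) := by
    intro k
    induction k with
    | zero =>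
      constructor
      · simp
      · simp only [List.replicate_succ, List.replicate_zero, List.nil_append, List.cons_append]
        simp [hj]
    | succ k ih =>
      refine ⟨by push_cast; exact_mod_cast ih.2, ?_⟩
      have h1 : List.replicate (k + 1 + 1) 2 ++ x :: t
          = 2 :: 2 :: (List.replicate k 2 ++ x :: t) := by
        simp [List.replicate_succ]
      have h2 : (2 : ℤ) :: (List.replicate k 2 ++ x :: t)
          = List.replicate (k + 1) 2 ++ x :: t := by
        simp [List.replicate_succ]
      rw [h1]
      show 2 * hj (2 :: (List.replicate k 2 ++ x :: t)) - hj (List.replicate k 2 ++ x :: t)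
          = _
      rw [h2, ih.1, ih.2]
      push_cast
      ring
  exact fun k => (key k).1

lemma hj_rep (m : ℕ) : hj (List.replicate m 2) = (m : ℤ) + 1 := by
  cases m with
  | zero => simp [hj]
  | succ k =>
    rw [List.replicate_succ', hj_rep_prepend]
    simp [hj]
    ring

lemma hj_x_rep (x : ℤ) (m : ℕ) : hj (x :: List.replicate m 2) = x * ((m : ℤ) + 1) - m := by
  cases m with
  | zero => simp [hj]
  | succ k =>
    rw [List.replicate_succ]
    show x * hj (2 :: List.replicate k 2) - hj (List.replicate k 2) = _
    rw [show (2 : ℤ) :: List.replicate k 2 = List.replicate (k + 1) 2 from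
      (List.replicate_succ (a := 2) (n := k)).symm, hj_rep, hj_rep]
    push_cast
    ring

lemma hj_xy_rep (x y : ℤ) (m : ℕ) :
    hj (x :: y :: List.replicate m 2) = x * (y * ((m : ℤ) + 1) - m) - ((m : ℤ) + 1) := by
  show x * hj (y :: List.replicate m 2) - hj (List.replicate m 2) = _
  rw [hj_x_rep, hj_rep]

theorem hj_mod_s_two (a₁ a₂ a₃ a₄ : ℤ) (h₁ : 2 ≤ a₁) (h₂ : 2 ≤ a₂) (h₃ : 2 ≤ a₃) (h₄ : 2 ≤ a₄)
    (s₂ : ℤ)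
    (hs₂ : s₂ = a₁ * (a₂ * a₃ * a₄ - a₃ * a₄ + a₄ - 1) - (a₁ * a₂ * a₃ - a₂ * a₃ + a₃ - 1)) :
    hj (List.replicate (a₃ - 2).toNat 2 ++ [a₂, a₄] ++ List.replicate (a₁ - 1).toNat 2) *
        (a₂ * a₃ * a₄ - a₃ * a₄ + a₄ - 1) =
      (a₁ * a₂ * a₄ - a₁ * a₂ + a₂ - 1) +
        (a₂ * a₃ * a₄ - a₂ * a₄ - a₃ * a₄ + 2 * a₄ - 1) * s₂ ∧
    hj (List.replicate (a₃ - 2).toNat 2 ++ [a₂, a₄] ++ List.replicate (a₁ - 1).toNat 2) *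
        (a₂ * a₃ * a₄ - a₃ * a₄ + a₄ - 1) ≡
      (a₁ * a₂ * a₄ - a₁ * a₂ + a₂ - 1) [ZMOD s₂] := by
  set k := (a₃ - 2).toNat with hkdef
  set m := (a₁ - 1).toNat with hmdef
  have hk : (k : ℤ) = a₃ - 2 := Int.toNat_of_nonneg (by linarith)
  have hm : (m : ℤ) = a₁ - 1 := Int.toNat_of_nonneg (by linarith)
  have hlist : List.replicate k 2 ++ [a₂, a₄] ++ List.replicate m 2
      = List.replicate k 2 ++ (a₂ :: a₄ :: List.replicate m 2) := by
    simp
  have H : hj (List.replicate k 2 ++ [a₂, a₄] ++ List.replicate m 2)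
      = ((k : ℤ) + 1) * (a₂ * (a₄ * ((m : ℤ) + 1) - m) - ((m : ℤ) + 1))
        - (k : ℤ) * (a₄ * ((m : ℤ) + 1) - m) := by
    rw [hlist, hj_rep_prepend, hj_xy_rep, hj_x_rep]
  have Hid : hj (List.replicate k 2 ++ [a₂, a₄] ++ List.replicate m 2) *
        (a₂ * a₃ * a₄ - a₃ * a₄ + a₄ - 1) =
      (a₁ * a₂ * a₄ - a₁ * a₂ + a₂ - 1) +
        (a₂ * a₃ * a₄ - a₂ * a₄ - a₃ * a₄ + 2 * a₄ - 1) * s₂ := by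
    rw [H, hk, hm, hs₂]; ring
  refine ⟨Hid, ?_⟩
  have : s₂ ∣ (a₁ * a₂ * a₄ - a₁ * a₂ + a₂ - 1) -
      hj (List.replicate k 2 ++ [a₂, a₄] ++ List.replicate m 2) *
        (a₂ * a₃ * a₄ - a₃ * a₄ + a₄ - 1) :=
    ⟨-(a₂ * a₃ * a₄ - a₂ * a₄ - a₃ * a₄ + 2 * a₄ - 1), by linear_combination -Hid⟩
  exact (Int.modEq_iff_dvd.mpr this)
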